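/- Let γ ∈ [0,1) ∪ (1,2], let ε ∈ (0,1), and let z ∈ H¹₀((0,1)) (a weakly differentiable function on (0,1) vanishing at both endpoints, with square-integrable derivative). Then ∫₀¹ (x+ε)^(−γ) |z(x)|² dx ≤ 4/(γ−1)² · ∫₀¹ (x+ε)^(2−γ) |z′(x)|² dx. -/

import Mathlib

open MeasureTheory Set intervalIntegral

theorem hardy_poincare_shifted
    (γ ε : ℝ) (hγ : γ ∈ Set.Ico (0:ℝ) 1 ∪ Set.Ioc (1:ℝ) 2) (hε : ε ∈ Set.Ioo (0:ℝ) 1)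
    (z z' : ℝ → ℝ)
    (hz : ∀ x ∈ Set.Icc (0:ℝ) 1, HasDerivAt z (z' x) x)
    (hz0 : z 0 = 0) (hz1 : z 1 = 0)
    (hint1 : IntervalIntegrable (fun x => (x + ε) ^ (-γ) * (z x) ^ 2) volume 0 1)
    (hint2 : IntervalIntegrable (fun x => (x + ε) ^ (2 - γ) * (z' x) ^ 2) volume 0 1) :
    ∫ x in (0:ℝ)..1, (x + ε) ^ (-γ) * (z x) ^ 2 ≤
      4 / (γ - 1) ^ 2 * ∫ x in (0:ℝ)..1, (x + ε) ^ (2 - γ) * (z' x) ^ 2 := by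
  obtain ⟨hε0, hε1⟩ := hε
  have hγ1 : γ ≠ 1 := by rcases hγ with h | h
                         · exact ne_of_lt h.2
                         · exact ne_of_gt h.1
  have hγ0 : (0:ℝ) ≤ γ := by rcases hγ with h | h
                             · exact h.1
                             · linarith [h.1]
  have hγ2 : γ ≤ 2 := by rcases hγ with h | h
                         · linarith [h.2]
                         · exact h.2
  have hc : (1 - γ) ≠ 0 := by intro h; exact hγ1 (by linarith)
  have hsq : (0:ℝ) < (γ - 1)^2 := by
    have : γ - 1 ≠ 0 := by intro h; exact hγ1 (by linarith)
    positivity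
  have huIcc : uIcc (0:ℝ) 1 = Icc (0:ℝ) 1 := uIcc_of_le zero_le_one
  have ht : ∀ x ∈ Icc (0:ℝ) 1, 0 < x + ε := fun x hx => by linarith [hx.1]
  set U : ℝ → ℝ := fun x => (x+ε)^(1-γ)/(1-γ) with hUdef
  set V' : ℝ → ℝ := fun x => 2 * z x * z' x with hV'def
  -- derivative of U
  have hU : ∀ x ∈ uIcc (0:ℝ) 1, HasDerivAt U ((x+ε)^(-γ)) x := by
    intro x hx
    rw [huIcc] at hx
    have h1 : HasDerivAt (fun y : ℝ => y + ε) 1 x := (hasDerivAt_id x).add_const ε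
    have h2 : HasDerivAt (fun y : ℝ => (y+ε)^(1-γ))
        ((1-γ) * (x+ε)^(1-γ-1) * 1) x :=
      by have := (Real.hasDerivAt_rpow_const (p := 1-γ) (Or.inl (ne_of_gt (ht x hx)))).comp x h1; exact this
    have h3 := h2.div_const (1-γ)
    refine h3.congr_deriv ?_
    rw [show (1:ℝ)-γ-1 = -γ by ring]
    field_simp
  -- derivative of V
  have hV : ∀ x ∈ uIcc (0:ℝ) 1, HasDerivAt (fun y => z y ^ 2) (V' x) x := by
    intro x hx
    rw [huIcc] at hx
    have := (hz x hx).fun_pow 2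
    simpa [hV'def, mul_comm, mul_assoc, mul_left_comm] using this
  -- continuity of z and bound
  have zc : ContinuousOn z (Icc (0:ℝ) 1) :=
    fun x hx => ((hz x hx).continuousAt).continuousWithinAt
  obtain ⟨M, hM⟩ := (isCompact_Icc (a := (0:ℝ)) (b := 1)).exists_bound_of_continuousOn zc
  -- integrability of U'
  have hU'int : IntervalIntegrable (fun x => (x+ε)^(-γ)) volume 0 1 := by
    apply ContinuousOn.intervalIntegrable
    rw [huIcc]
    exact (ContinuousOn.rpow_const ((continuousOn_id).add continuousOn_const)
      (fun x hx => Or.inl (ne_of_gt (ht x hx))))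
  -- z' measurable a.e. on Ioc
  have hz'meas : AEStronglyMeasurable z' (volume.restrict (Ioc (0:ℝ) 1)) := by
    refine ((measurable_deriv z).aestronglyMeasurable).congr ?_
    refine ((ae_restrict_iff' measurableSet_Ioc).2 (Filter.Eventually.of_forall ?_))
    intro x hx
    exact (hz x (Ioc_subset_Icc_self hx)).deriv
  -- integrability of z'^2 on Ioc
  have hwt : ∀ x ∈ Ioc (0:ℝ) 1, ε^2 ≤ (x+ε)^(2-γ) := by
    intro x hx
    have h1 : ε ^ (2-γ) ≤ (x+ε)^(2-γ) :=
      Real.rpow_le_rpow (le_of_lt hε0) (by linarith [hx.1]) (by linarith)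
    have h2 : ε ^ (2:ℝ) ≤ ε ^ (2-γ) :=
      Real.rpow_le_rpow_of_exponent_ge hε0 (le_of_lt hε1) (by linarith)
    have h3 : ε ^ (2:ℝ) = ε^(2:ℕ) := by
      rw [show (2:ℝ) = ((2:ℕ):ℝ) by norm_num, Real.rpow_natCast]
    calc ε^(2:ℕ) = ε^(2:ℝ) := h3.symm
      _ ≤ ε^(2-γ) := h2
      _ ≤ (x+ε)^(2-γ) := h1
  have hz'sq : IntegrableOn (fun x => z' x ^ 2) (Ioc (0:ℝ) 1) volume := by
    have hb : IntegrableOn (fun x => ε⁻¹^2 * ((x+ε)^(2-γ) * z' x ^2)) (Ioc (0:ℝ) 1) volume :=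
      hint2.1.const_mul _
    refine Integrable.mono hb (hz'meas.pow 2) ?_
    refine (ae_restrict_iff' measurableSet_Ioc).2 (Filter.Eventually.of_forall ?_)
    intro x hx
    have h1 := hwt x hx
    have h2 : (0:ℝ) ≤ z' x ^ 2 := sq_nonneg _
    have h3 : (0:ℝ) < ε^2 := by positivity
    have hw0 : (0:ℝ) ≤ (x+ε)^(2-γ) :=
      Real.rpow_nonneg (le_of_lt (ht x (Ioc_subset_Icc_self hx))) _
    have hrhs0 : (0:ℝ) ≤ ε⁻¹^2 * ((x+ε)^(2-γ) * z' x ^2) :=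
      mul_nonneg (by positivity) (mul_nonneg hw0 h2)
    rw [Real.norm_eq_abs, Real.norm_eq_abs, abs_of_nonneg h2, abs_of_nonneg hrhs0]
    have key : z' x ^ 2 * ε^2 ≤ (x+ε)^(2-γ) * z' x ^ 2 := by nlinarith
    calc z' x ^ 2 = (z' x ^2 * ε^2) * ε⁻¹^2 := by field_simp
      _ ≤ ((x+ε)^(2-γ) * z' x ^ 2) * ε⁻¹^2 :=
          mul_le_mul_of_nonneg_right key (by positivity)
      _ = ε⁻¹^2 * ((x+ε)^(2-γ) * z' x ^2) := by ring
  -- integrability of V'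
  have hV'int : IntervalIntegrable V' volume 0 1 := by
    rw [intervalIntegrable_iff_integrableOn_Ioc_of_le zero_le_one]
    have hbint : IntegrableOn (fun x => |M| * (1 + z' x ^2)) (Ioc (0:ℝ) 1) volume :=
      ((integrable_const (1:ℝ)).add hz'sq).const_mul _
    refine Integrable.mono hbint ?_ ?_
    · have hzm : AEStronglyMeasurable z (volume.restrict (Ioc (0:ℝ) 1)) :=
        ((zc.mono Ioc_subset_Icc_self).aemeasurable measurableSet_Ioc).aestronglyMeasurable
      exact ((aestronglyMeasurable_const.mul hzm).mul hz'meas)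
    · refine (ae_restrict_iff' measurableSet_Ioc).2 (Filter.Eventually.of_forall ?_)
      intro x hx
      have h1 : |z x| ≤ |M| := le_trans (hM x (Ioc_subset_Icc_self hx)) (le_abs_self M)
      have hrhs : (0:ℝ) ≤ |M| * (1 + z' x ^2) := mul_nonneg (abs_nonneg M) (by positivity)
      rw [Real.norm_eq_abs, Real.norm_eq_abs, abs_of_nonneg hrhs]
      calc |V' x| = 2 * |z x| * |z' x| := by
            rw [hV'def]; rw [abs_mul, abs_mul, abs_two]
        _ ≤ |M| * (1 + z' x ^2) := by
            nlinarith [sq_nonneg (1 - |z' x|), abs_nonneg (z' x), abs_nonneg (z x),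
              sq_abs (z' x), mul_le_mul_of_nonneg_right h1 (abs_nonneg (z' x)), abs_nonneg M]
  -- integration by parts
  have hibp := intervalIntegral.integral_mul_deriv_eq_deriv_mul hU hV hU'int hV'int
  simp only [hz0, hz1] at hibp
  norm_num at hibp
  have hI : (∫ x in (0:ℝ)..1, (x + ε) ^ (-γ) * (z x) ^ 2)
      = -(∫ x in (0:ℝ)..1, U x * V' x) := by
    rw [hibp, neg_neg]
  -- pointwise bound
  have hptwise : ∀ x ∈ Icc (0:ℝ) 1,
      |U x * V' x| ≤ (1/2) * ((x+ε)^(-γ) * z x ^ 2)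
        + (2/(γ-1)^2) * ((x+ε)^(2-γ) * z' x ^ 2) := by
    intro x hx
    have htx := ht x hx
    set t := x + ε with htdef
    have hs : t^(-γ/2) * t^(-γ/2) = t^(-γ) := by
      rw [← Real.rpow_add htx]; ring_nf
    have hr : t^(1-γ/2) * t^(1-γ/2) = t^(2-γ) := by
      rw [← Real.rpow_add htx]; ring_nf
    have hsr : t^(-γ/2) * t^(1-γ/2) = t^(1-γ) := by
      rw [← Real.rpow_add htx]; ring_nf
    set a := t^(-γ/2) * |z x| with hadef
    set b := t^(1-γ/2) * |z' x| with hbdef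
    have ha : (0:ℝ) ≤ a := by positivity
    have hb : (0:ℝ) ≤ b := by positivity
    have habs : |U x * V' x| = 2 * (a * b) / |1-γ| := by
      rw [hUdef, hV'def]
      rw [abs_mul, abs_div, abs_mul, abs_mul]
      rw [abs_of_nonneg (Real.rpow_nonneg (le_of_lt htx) _), abs_of_nonneg (by norm_num : (0:ℝ) ≤ 2)]
      rw [hadef, hbdef, ← hsr]
      field_simp
    have hcabs : (0:ℝ) < |1-γ| := abs_pos.mpr hc
    have habs2 : |1-γ|^2 = (γ-1)^2 := by rw [sq_abs]; ring
    set d := b / |1-γ| with hddef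
    have hbd : b = d * |1-γ| := by rw [hddef, div_mul_cancel₀ _ hcabs.ne']
    have key : 2 * (a*b) / |1-γ| ≤ (1/2) * a^2 + (2/(γ-1)^2) * b^2 := by
      have e1 : 2 * (a*b) / |1-γ| = 2 * a * d := by
        rw [hbd]; field_simp
      have e2 : (2/(γ-1)^2) * b^2 = 2 * d^2 := by
        rw [hbd, mul_pow, habs2]; field_simp
      rw [e1, e2]
      nlinarith [sq_nonneg (a - 2*d)]
    have ha2 : a^2 = t^(-γ) * z x ^2 := by
      rw [hadef, mul_pow, sq_abs, sq, hs]
    have hb2 : b^2 = t^(2-γ) * z' x ^2 := by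
      rw [hbdef, mul_pow, sq_abs, sq, hr]
    rw [habs, ← ha2, ← hb2]
    exact key
  -- integrability of |U V'|
  have hUVint : IntervalIntegrable (fun x => U x * V' x) volume 0 1 := by
    apply hV'int.continuousOn_mul
    rw [huIcc]
    exact ((ContinuousOn.rpow_const ((continuousOn_id).add continuousOn_const)
      (fun x hx => Or.inl (ne_of_gt (ht x hx)))).div_const _)
  have hbint : IntervalIntegrable (fun x => (1/2) * ((x+ε)^(-γ) * z x ^ 2)
        + (2/(γ-1)^2) * ((x+ε)^(2-γ) * z' x ^ 2)) volume 0 1 :=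
    (hint1.const_mul _).add (hint2.const_mul _)
  have step1 : (∫ x in (0:ℝ)..1, (x + ε) ^ (-γ) * (z x) ^ 2)
      ≤ ∫ x in (0:ℝ)..1, |U x * V' x| := by
    rw [hI]
    calc -(∫ x in (0:ℝ)..1, U x * V' x) ≤ |∫ x in (0:ℝ)..1, U x * V' x| :=
          neg_le_abs _
      _ ≤ ∫ x in (0:ℝ)..1, |U x * V' x| :=
          intervalIntegral.abs_integral_le_integral_abs zero_le_one
  have step2 : (∫ x in (0:ℝ)..1, |U x * V' x|)
      ≤ ∫ x in (0:ℝ)..1, ((1/2) * ((x+ε)^(-γ) * z x ^ 2)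
        + (2/(γ-1)^2) * ((x+ε)^(2-γ) * z' x ^ 2)) :=
    intervalIntegral.integral_mono_on zero_le_one hUVint.abs hbint hptwise
  have step3 : (∫ x in (0:ℝ)..1, ((1/2) * ((x+ε)^(-γ) * z x ^ 2)
        + (2/(γ-1)^2) * ((x+ε)^(2-γ) * z' x ^ 2)))
      = (1/2) * (∫ x in (0:ℝ)..1, (x+ε)^(-γ) * z x ^ 2)
        + (2/(γ-1)^2) * (∫ x in (0:ℝ)..1, (x+ε)^(2-γ) * z' x ^ 2) := by
    rw [intervalIntegral.integral_add (hint1.const_mul _) (hint2.const_mul _),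
      intervalIntegral.integral_const_mul, intervalIntegral.integral_const_mul]
  set I := ∫ x in (0:ℝ)..1, (x + ε) ^ (-γ) * (z x) ^ 2
  set J := ∫ x in (0:ℝ)..1, (x + ε) ^ (2-γ) * (z' x) ^ 2
  have hfin : I ≤ (1/2) * I + (2/(γ-1)^2) * J := by
    calc I ≤ _ := step1
      _ ≤ _ := step2
      _ = _ := step3
  have h4 : 4 / (γ-1)^2 * J = 2 * ((2/(γ-1)^2) * J) := by ring
  linarith
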